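/- Let G be the graph on ℤ^d with u adjacent to v iff ‖u − v‖_∞ = 1, let S ⊆ ℤ^d, and let ∂_E S be the set of edges of G with exactly one endpoint in S. Define the graph △ on vertex set ∂_E S in which two boundary edges are adjacent iff they lie in a common triangle of G. Then every vertex of △ has even degree. -/

import Mathlib

/-- The graph on `ℤ^d` in which two vectors are adjacent iff their difference has
`ℓ∞`-norm exactly `1`. -/
def latticeGraph (d : ℕ) : SimpleGraph (Fin d → ℤ) where
  Adj u v := u ≠ v ∧ ∀ i, |u i - v i| ≤ 1
  symm := by
    constructor
    intro u v h
    exact ⟨h.1.symm, fun i => by rw [abs_sub_comm]; exact h.2 i⟩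
  loopless := by
    constructor
    intro u h
    exact h.1 rfl

/-- The set of boundary edges of `S` in the `ℓ∞`-lattice graph on `ℤ^d`, each
represented by its ordered pair `(u, v)` with `u ∈ S` and `v ∉ S`. -/
def boundaryEdges (d : ℕ) (S : Set (Fin d → ℤ)) : Set ((Fin d → ℤ) × (Fin d → ℤ)) :=
  {p | p.1 ∈ S ∧ p.2 ∉ S ∧ (latticeGraph d).Adj p.1 p.2}

lemma evenCommonNbrs (d : ℕ) (u v : Fin d → ℤ) (huv : (latticeGraph d).Adj u v) :
    Even {w | (latticeGraph d).Adj u w ∧ (latticeGraph d).Adj v w}.ncard := by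
  obtain ⟨hne, hbd⟩ := huv
  set t : Fin d → Set ℤ := fun i => {a | |u i - a| ≤ 1 ∧ |v i - a| ≤ 1} with ht
  set B : Set (Fin d → ℤ) := Set.univ.pi t with hB
  have htfin : ∀ i, (t i).Finite := by
    intro i
    apply (Set.finite_Icc (u i - 1) (u i + 1)).subset
    intro a ha
    have := ha.1
    rw [abs_le] at this
    constructor <;> omega
  have hBfin : B.Finite := Set.Finite.pi htfin
  have hNB : {w | (latticeGraph d).Adj u w ∧ (latticeGraph d).Adj v w} = B \ {u, v} := by
    ext w
    simp only [Set.mem_setOf_eq, Set.mem_diff, hB, Set.mem_univ_pi, Set.mem_insert_iff,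
      Set.mem_singleton_iff, latticeGraph, ht, Set.mem_setOf_eq]
    constructor
    · rintro ⟨⟨h1, h2⟩, ⟨h3, h4⟩⟩
      exact ⟨fun i => ⟨h2 i, h4 i⟩, by rintro (rfl | rfl) <;> simp_all⟩
    · rintro ⟨h1, h2⟩
      push_neg at h2
      exact ⟨⟨fun h => h2.1 h.symm, fun i => (h1 i).1⟩, ⟨fun h => h2.2 h.symm, fun i => (h1 i).2⟩⟩
  have huB : u ∈ B := by
    intro i _
    exact ⟨by simp, by rw [abs_sub_comm]; exact hbd i⟩
  have hvB : v ∈ B := by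
    intro i _
    exact ⟨hbd i, by simp⟩
  have hsub : ({u, v} : Set (Fin d → ℤ)) ⊆ B := by
    rintro w (rfl | rfl); exacts [huB, hvB]
  have hBcard : Even B.ncard := by
    have h1 : B.ncard = ∏ i, (t i).ncard := by
      rw [← Nat.card_coe_set_eq]
      rw [Nat.card_congr (Equiv.Set.univPi t), Nat.card_pi]
      exact Finset.prod_congr rfl fun i _ => Nat.card_coe_set_eq (t i)
    rw [h1]
    obtain ⟨i0, hi0⟩ : ∃ i, u i ≠ v i := by
      by_contra h
      push_neg at h
      exact hne (funext h)
    have hti0 : t i0 = {u i0, v i0} := by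
      have h1 := hbd i0
      rw [abs_le] at h1
      ext a
      simp only [ht, Set.mem_setOf_eq, Set.mem_insert_iff, Set.mem_singleton_iff, abs_le]
      omega
    have h2 : (t i0).ncard = 2 := by rw [hti0]; exact Set.ncard_pair hi0
    have hdvd : 2 ∣ ∏ i, (t i).ncard := h2 ▸ Finset.dvd_prod_of_mem _ (Finset.mem_univ i0)
    obtain ⟨c, hc⟩ := hdvd
    exact ⟨c, by omega⟩
  rw [hNB, Set.ncard_diff hsub (Set.toFinite _)]
  rw [Set.ncard_pair hne]
  exact hBcard.tsub even_two

/-- Two boundary edges lie in a common triangle of the `ℓ∞`-lattice graph. -/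
def inCommonTriangle (d : ℕ) (p q : (Fin d → ℤ) × (Fin d → ℤ)) : Prop :=
  ∃ x y z : Fin d → ℤ,
    (latticeGraph d).Adj x y ∧ (latticeGraph d).Adj y z ∧ (latticeGraph d).Adj x z ∧
    ({p.1, p.2} : Set (Fin d → ℤ)) ⊆ {x, y, z} ∧
    ({q.1, q.2} : Set (Fin d → ℤ)) ⊆ {x, y, z}

/-- In the graph on the boundary edges `∂_E S` of a set `S ⊆ ℤ^d`, where two boundary
edges are adjacent iff they lie in a common triangle of the `ℓ∞`-lattice graph, every
vertex has even degree. -/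
lemma tri_third (d : ℕ) {x y z u v : Fin d → ℤ}
    (hxy : (latticeGraph d).Adj x y) (hyz : (latticeGraph d).Adj y z)
    (hxz : (latticeGraph d).Adj x z)
    (hu : u ∈ ({x, y, z} : Set (Fin d → ℤ))) (hv : v ∈ ({x, y, z} : Set (Fin d → ℤ)))
    (huv : u ≠ v) :
    ∃ w, (latticeGraph d).Adj u w ∧ (latticeGraph d).Adj v w ∧
      ({x, y, z} : Set (Fin d → ℤ)) ⊆ {u, v, w} := by
  simp only [Set.mem_insert_iff, Set.mem_singleton_iff] at hu hv
  have sub3 : ∀ w : Fin d → ℤ, ({x, y, z} : Set (Fin d → ℤ)) ⊆ {u, v, w} →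
      True := fun _ _ => trivial
  rcases hu with rfl | rfl | rfl <;> rcases hv with rfl | rfl | rfl <;>
    first
    | exact absurd rfl huv
    | (refine ⟨x, ?_, ?_, ?_⟩ <;>
        first
        | assumption
        | exact hxy.symm
        | exact hxz.symm
        | exact hyz.symm
        | (intro a ha; simp only [Set.mem_insert_iff, Set.mem_singleton_iff] at ha ⊢; tauto))
    | (refine ⟨y, ?_, ?_, ?_⟩ <;>
        first
        | assumption
        | exact hxy.symm
        | exact hxz.symm
        | exact hyz.symm
        | (intro a ha; simp only [Set.mem_insert_iff, Set.mem_singleton_iff] at ha ⊢; tauto))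
    | (refine ⟨z, ?_, ?_, ?_⟩ <;>
        first
        | assumption
        | exact hxy.symm
        | exact hxz.symm
        | exact hyz.symm
        | (intro a ha; simp only [Set.mem_insert_iff, Set.mem_singleton_iff] at ha ⊢; tauto))

theorem boundaryEdges_even_degree (d : ℕ) (S : Set (Fin d → ℤ))
    (p : (Fin d → ℤ) × (Fin d → ℤ)) (hp : p ∈ boundaryEdges d S) :
    Even {q | q ∈ boundaryEdges d S ∧ q ≠ p ∧ inCommonTriangle d p q}.ncard := by
  classical
  obtain ⟨hu, hv, hadj⟩ := hp
  set u := p.1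
  set v := p.2
  set N : Set (Fin d → ℤ) := {w | (latticeGraph d).Adj u w ∧ (latticeGraph d).Adj v w} with hN
  set f : (Fin d → ℤ) → (Fin d → ℤ) × (Fin d → ℤ) :=
    fun w => if w ∈ S then (w, v) else (u, w) with hf
  have himg : f '' N = {q | q ∈ boundaryEdges d S ∧ q ≠ p ∧ inCommonTriangle d p q} := by
    ext q
    constructor
    · rintro ⟨w, ⟨hadjuw, hadjvw⟩, rfl⟩
      by_cases hwS : w ∈ S
      · simp only [hf, if_pos hwS]
        refine ⟨⟨hwS, hv, hadjvw.symm⟩, ?_, u, v, w, hadj, hadjvw, hadjuw, ?_, ?_⟩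
        · intro h
          exact hadjuw.ne (congrArg Prod.fst h).symm
        · intro a ha; simp only [Set.mem_insert_iff, Set.mem_singleton_iff] at ha ⊢; tauto
        · intro a ha; simp only [Set.mem_insert_iff, Set.mem_singleton_iff] at ha ⊢; tauto
      · simp only [hf, if_neg hwS]
        refine ⟨⟨hu, hwS, hadjuw⟩, ?_, u, v, w, hadj, hadjvw, hadjuw, ?_, ?_⟩
        · intro h
          exact hadjvw.ne (congrArg Prod.snd h).symm
        · intro a ha; simp only [Set.mem_insert_iff, Set.mem_singleton_iff] at ha ⊢; tauto
        · intro a ha; simp only [Set.mem_insert_iff, Set.mem_singleton_iff] at ha ⊢; tauto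
    · rintro ⟨⟨hq1, hq2, hqadj⟩, hqp, x, y, z, hxy, hyz, hxz, hps, hqs⟩
      have hup : u ∈ ({x, y, z} : Set (Fin d → ℤ)) := hps (by simp; exact Or.inl rfl)
      have hvp : v ∈ ({x, y, z} : Set (Fin d → ℤ)) := hps (by simp; exact Or.inr rfl)
      obtain ⟨w, hadjuw, hadjvw, hsub⟩ := tri_third d hxy hyz hxz hup hvp hadj.ne
      have hq1m : q.1 ∈ ({u, v, w} : Set (Fin d → ℤ)) := hsub (hqs (by simp))
      have hq2m : q.2 ∈ ({u, v, w} : Set (Fin d → ℤ)) := hsub (hqs (by simp))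
      simp only [Set.mem_insert_iff, Set.mem_singleton_iff] at hq1m hq2m
      refine ⟨w, ⟨hadjuw, hadjvw⟩, ?_⟩
      rcases hq1m with h1 | h1 | h1
      · rcases hq2m with h2 | h2 | h2
        · exact absurd (h1.trans h2.symm) hqadj.ne
        · exact absurd (show q = p from Prod.ext h1 h2) hqp
        · have hwS : w ∉ S := h2 ▸ hq2
          simp only [hf, if_neg hwS]
          exact (show q = (u, w) from Prod.ext h1 h2).symm
      · exact absurd (h1 ▸ hq1) hv
      · have hwS : w ∈ S := h1 ▸ hq1
        simp only [hf, if_pos hwS]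
        rcases hq2m with h2 | h2 | h2
        · exact absurd (h2 ▸ hq2) (fun h => h hu)
        · exact (show q = (w, v) from Prod.ext h1 h2).symm
        · exact absurd (h1.trans h2.symm) hqadj.ne
  have hinj : Set.InjOn f N := by
    intro w hw w' hw' hff
    by_cases h1 : w ∈ S <;> by_cases h2 : w' ∈ S <;>
      simp only [hf, if_pos, if_neg, h1, h2, if_true, if_false, Prod.mk.injEq] at hff
    · exact hff.1
    · exact absurd hff.1.symm hw.1.ne
    · exact absurd hff.1 hw'.1.ne
    · exact hff.2
  rw [← himg, Set.ncard_image_of_injOn hinj]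
  exact evenCommonNbrs d u v hadj
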